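/- Let G be a simple graph with edge set E ≠ ∅ and let D(G) be the double subdivision of all edges of G. Then D(G) can be edge-covered by |E| cochordal subgraphs; that is, cochord(D(G)) ≤ |E|. -/

import Mathlib

/-- `G` contains an induced cycle on `n` vertices. -/
def HasInducedCycle {V : Type*} (G : SimpleGraph V) (n : ℕ) : Prop :=
  ∃ f : ZMod n → V, Function.Injective f ∧
    ∀ i j : ZMod n, G.Adj (f i) (f j) ↔ (j = i + 1 ∨ i = j + 1)

/-- A graph is chordal if it contains no induced cycle of length at least `4`. -/
def Chordal {V : Type*} (G : SimpleGraph V) : Prop :=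
  ∀ n : ℕ, 4 ≤ n → ¬ HasInducedCycle G n

/-- A graph is cochordal if its complement is chordal. -/
def Cochordal {V : Type*} (G : SimpleGraph V) : Prop := Chordal Gᶜ

/-- The cochordal cover number of `G`: the least `n` such that `G` has `n` cochordal
subgraphs whose edge sets cover all edges of `G`. -/
noncomputable def cochordNumber {V : Type*} (G : SimpleGraph V) : ℕ :=
  sInf {n : ℕ | ∃ H : Fin n → G.Subgraph,
    (∀ i, Cochordal (H i).coe) ∧ (⋃ i, (H i).edgeSet) = G.edgeSet}

/-- The double subdivision `D(G)` of `G`: every edge `uv` is replaced by a path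
`u – m(u,v) – m(v,u) – v` through two new vertices. -/
def doubleSubdivision {V : Type*} (G : SimpleGraph V) :
    SimpleGraph (V ⊕ {p : V × V // G.Adj p.1 p.2}) :=
  SimpleGraph.fromRel fun a b =>
    match a, b with
    | Sum.inl u, Sum.inr p => p.1.1 = u
    | Sum.inr p, Sum.inr q => p.1.1 = q.1.2 ∧ p.1.2 = q.1.1
    | _, _ => False

lemma chordal_of_edge_count {V : Type*} (G : SimpleGraph V) (hfin : G.edgeSet.Finite)
    (h3 : G.edgeSet.ncard ≤ 3) : Chordal G := by
  rintro n hn ⟨f, hinj, hadj⟩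
  haveI : NeZero n := ⟨by omega⟩
  haveI := hfin.to_subtype
  set g : ZMod n → G.edgeSet := fun i => ⟨s(f i, f (i+1)), by
    rw [SimpleGraph.mem_edgeSet, hadj]; left; rfl⟩ with hg
  have hginj : Function.Injective g := by
    intro i j hij
    have := congrArg Subtype.val hij
    simp only [hg, Sym2.eq_iff] at this
    rcases this with ⟨h1, _⟩ | ⟨h1, h2⟩
    · exact hinj h1
    · have hi : i = j + 1 := hinj h1
      have hj : i + 1 = j := hinj h2
      have : (2 : ZMod n) = 0 := by
        have := hj
        rw [hi] at this
        have h := sub_eq_zero.mpr this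
        ring_nf at h ⊢
        linear_combination h
      rw [show (2 : ZMod n) = ((2:ℕ) : ZMod n) by norm_cast,
        ZMod.natCast_eq_zero_iff] at this
      exact absurd (Nat.le_of_dvd (by omega) this) (by omega)
  have := Nat.card_le_card_of_injective g hginj
  rw [Nat.card_zmod, Nat.card_coe_set_eq] at this
  omega

section DS
variable {V : Type*} {G : SimpleGraph V}

lemma ds_adj_inl_inl (u w : V) : ¬ (doubleSubdivision G).Adj (Sum.inl u) (Sum.inl w) := by
  simp [doubleSubdivision, SimpleGraph.fromRel_adj]

lemma ds_adj_inl_inr (u : V) (p : {p : V × V // G.Adj p.1 p.2}) :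
    (doubleSubdivision G).Adj (Sum.inl u) (Sum.inr p) ↔ p.1.1 = u := by
  simp [doubleSubdivision, SimpleGraph.fromRel_adj]

lemma ds_adj_inr_inl (u : V) (p : {p : V × V // G.Adj p.1 p.2}) :
    (doubleSubdivision G).Adj (Sum.inr p) (Sum.inl u) ↔ p.1.1 = u := by
  simp [doubleSubdivision, SimpleGraph.fromRel_adj]

lemma ds_adj_inr_inr (p q : {p : V × V // G.Adj p.1 p.2}) :
    (doubleSubdivision G).Adj (Sum.inr p) (Sum.inr q) ↔
      p ≠ q ∧ (p.1.1 = q.1.2 ∧ p.1.2 = q.1.1) := by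
  constructor
  · rintro ⟨hne, h | h⟩
    · exact ⟨fun h' => hne (by rw [h']), h⟩
    · exact ⟨fun h' => hne (by rw [h']), h.2.symm, h.1.symm⟩
  · rintro ⟨hne, h⟩
    exact ⟨fun h' => hne (Sum.inr_injective h'), Or.inl h⟩

/-- The vertex set of the star of the middle edge associated to `e`. -/
def midSet (G : SimpleGraph V) (e : Sym2 V) : Set (V ⊕ {p : V × V // G.Adj p.1 p.2}) :=
  fun x => Sum.elim (· ∈ e) (fun p => Sym2.mk p.1.1 p.1.2 = e) x

lemma mem_def' {α : Type*} {a : α} {s : Set α} : a ∈ s ↔ s a := Iff.rfl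

lemma mem_midSet_iff {u v : V} (h : G.Adj u v) (x : V ⊕ {p : V × V // G.Adj p.1 p.2}) :
    x ∈ midSet G s(u, v) ↔
      x = Sum.inl u ∨ x = Sum.inl v ∨ x = Sum.inr ⟨(u, v), h⟩ ∨ x = Sum.inr ⟨(v, u), h.symm⟩ := by
  cases x with
  | inl w =>
    simp only [midSet, mem_def', Sum.elim_inl, Sym2.mem_iff]
    constructor
    · rintro (rfl | rfl)
      · exact Or.inl rfl
      · exact Or.inr (Or.inl rfl)
    · rintro (hw | hw | hw | hw) <;> simp_all
  | inr p =>
    simp only [midSet, mem_def', Sum.elim_inr]; rw [Sym2.mk_eq_mk_iff (q := (u, v))]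
    constructor
    · intro hp
      have : p.1 = (u, v) ∨ p.1 = (v, u) := by
        rcases hp with hp | hp
        · left; exact hp
        · right; rw [hp]; rfl
      rcases this with hp1 | hp1
      · right; right; left; congr 1; exact Subtype.ext hp1
      · right; right; right; congr 1; exact Subtype.ext hp1
    · rintro (hp | hp | hp | hp)
      · exact absurd hp (by simp)
      · exact absurd hp (by simp)
      · rw [Sum.inr.injEq] at hp; left; rw [hp]
      · rw [Sum.inr.injEq] at hp; right; rw [hp]; rfl

lemma mem_midSet_inl (w : V) (e : Sym2 V) : Sum.inl w ∈ midSet G e ↔ w ∈ e := Iff.rfl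

lemma mem_midSet_inr (p : {p : V × V // G.Adj p.1 p.2}) (e : Sym2 V) :
    Sum.inr p ∈ midSet G e ↔ Sym2.mk p.1.1 p.1.2 = e := Iff.rfl

lemma cochordal_mid {u v : V} (h : G.Adj u v) :
    Cochordal (((⊤ : (doubleSubdivision G).Subgraph).induce (midSet G s(u, v))).coe) := by
  set D := doubleSubdivision G with hD
  set H := (⊤ : D.Subgraph).induce (midSet G s(u, v)) with hH
  have hm0 : Sum.inl u ∈ H.verts := (mem_midSet_iff h _).mpr (Or.inl rfl)
  have hm1 : Sum.inr (⟨(u, v), h⟩ : {p : V × V // G.Adj p.1 p.2}) ∈ H.verts :=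
    (mem_midSet_iff h _).mpr (Or.inr (Or.inr (Or.inl rfl)))
  have hm2 : Sum.inr (⟨(v, u), h.symm⟩ : {p : V × V // G.Adj p.1 p.2}) ∈ H.verts :=
    (mem_midSet_iff h _).mpr (Or.inr (Or.inr (Or.inr rfl)))
  have hm3 : Sum.inl v ∈ H.verts := (mem_midSet_iff h _).mpr (Or.inr (Or.inl rfl))
  let v0 : ↥H.verts := ⟨_, hm0⟩
  let v1 : ↥H.verts := ⟨_, hm1⟩
  let v2 : ↥H.verts := ⟨_, hm2⟩
  let v3 : ↥H.verts := ⟨_, hm3⟩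
  have hsub : (H.coeᶜ).edgeSet ⊆ {s(v0, v2), s(v0, v3), s(v1, v3)} := by
    intro e he
    induction e using Sym2.ind with
    | _ a b =>
      rw [SimpleGraph.mem_edgeSet, SimpleGraph.compl_adj] at he
      obtain ⟨hne, hnadj⟩ := he
      have hnadj' : ¬ D.Adj ↑a ↑b := fun hd => hnadj ⟨a.2, b.2, hd⟩
      have hxa := (mem_midSet_iff h _).mp a.2
      have hxb := (mem_midSet_iff h _).mp b.2
      have hne12 : (⟨(u, v), h⟩ : {p : V × V // G.Adj p.1 p.2}) ≠ ⟨(v, u), h.symm⟩ :=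
        fun he' => h.ne (congrArg (fun p => p.1.1) he')
      rcases hxa with h0 | h0 | h0 | h0 <;> rcases hxb with h1 | h1 | h1 | h1 <;>
        [obtain rfl : a = v0 := Subtype.ext h0; obtain rfl : a = v0 := Subtype.ext h0;
         obtain rfl : a = v0 := Subtype.ext h0; obtain rfl : a = v0 := Subtype.ext h0;
         obtain rfl : a = v3 := Subtype.ext h0; obtain rfl : a = v3 := Subtype.ext h0;
         obtain rfl : a = v3 := Subtype.ext h0; obtain rfl : a = v3 := Subtype.ext h0;
         obtain rfl : a = v1 := Subtype.ext h0; obtain rfl : a = v1 := Subtype.ext h0;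
         obtain rfl : a = v1 := Subtype.ext h0; obtain rfl : a = v1 := Subtype.ext h0;
         obtain rfl : a = v2 := Subtype.ext h0; obtain rfl : a = v2 := Subtype.ext h0;
         obtain rfl : a = v2 := Subtype.ext h0; obtain rfl : a = v2 := Subtype.ext h0] <;>
        [obtain rfl : b = v0 := Subtype.ext h1; obtain rfl : b = v3 := Subtype.ext h1;
         obtain rfl : b = v1 := Subtype.ext h1; obtain rfl : b = v2 := Subtype.ext h1;
         obtain rfl : b = v0 := Subtype.ext h1; obtain rfl : b = v3 := Subtype.ext h1;
         obtain rfl : b = v1 := Subtype.ext h1; obtain rfl : b = v2 := Subtype.ext h1;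
         obtain rfl : b = v0 := Subtype.ext h1; obtain rfl : b = v3 := Subtype.ext h1;
         obtain rfl : b = v1 := Subtype.ext h1; obtain rfl : b = v2 := Subtype.ext h1;
         obtain rfl : b = v0 := Subtype.ext h1; obtain rfl : b = v3 := Subtype.ext h1;
         obtain rfl : b = v1 := Subtype.ext h1; obtain rfl : b = v2 := Subtype.ext h1] <;>
        first
          | exact absurd rfl hne
          | exact absurd (hnadj' ((ds_adj_inl_inr _ _).mpr rfl)) not_false
          | exact absurd (hnadj' ((ds_adj_inr_inl _ _).mpr rfl)) not_false
          | exact absurd (hnadj' ((ds_adj_inr_inr _ _).mpr ⟨hne12, rfl, rfl⟩)) not_false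
          | exact absurd (hnadj' ((ds_adj_inr_inr _ _).mpr ⟨hne12.symm, rfl, rfl⟩)) not_false
          | (simp only [Set.mem_insert_iff, Set.mem_singleton_iff, Sym2.eq_iff]; tauto)
  have hfin3 : ({s(v0, v2), s(v0, v3), s(v1, v3)} : Set (Sym2 ↥H.verts)).Finite :=
    (((Set.finite_singleton _).insert _).insert _)
  have hfin : ((H.coeᶜ).edgeSet).Finite := hfin3.subset hsub
  refine chordal_of_edge_count _ hfin ?_
  refine le_trans (Set.ncard_le_ncard hsub hfin3) ?_
  refine le_trans (Set.ncard_insert_le _ _) ?_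
  have := Set.ncard_insert_le (s(v0, v3)) ({s(v1, v3)} : Set (Sym2 ↥H.verts))
  rw [Set.ncard_singleton] at this
  omega

lemma cochordal_mid' (e : Sym2 V) (he : e ∈ G.edgeSet) :
    Cochordal (((⊤ : (doubleSubdivision G).Subgraph).induce (midSet G e)).coe) := by
  induction e using Sym2.ind with
  | _ u v => exact cochordal_mid (by rwa [SimpleGraph.mem_edgeSet] at he)
end DS

/-- If `G` has at least one edge, then `D(G)` can be edge-covered by `|E(G)|` cochordal
subgraphs: `cochord(D(G)) ≤ |E(G)|`. -/
theorem stmt_11 {V : Type*} [Fintype V] (G : SimpleGraph V) (hE : G.edgeSet.Nonempty) :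
    cochordNumber (doubleSubdivision G) ≤ G.edgeSet.ncard := by
  classical
  have hfinE : G.edgeSet.Finite := Set.toFinite _
  haveI := hfinE.to_subtype
  obtain ⟨eqv⟩ : Nonempty (↥G.edgeSet ≃ Fin G.edgeSet.ncard) :=
    ⟨Finite.equivFinOfCardEq (Nat.card_coe_set_eq _)⟩
  set D := doubleSubdivision G with hD
  let F : Fin G.edgeSet.ncard → D.Subgraph :=
    fun i => (⊤ : D.Subgraph).induce (midSet G ↑(eqv.symm i))
  apply Nat.sInf_le
  refine ⟨F, fun i => cochordal_mid' _ (eqv.symm i).2, ?_⟩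
  have h1 : ⋃ i, (F i).edgeSet
      = ⋃ e : ↥G.edgeSet, ((⊤ : D.Subgraph).induce (midSet G ↑e)).edgeSet :=
    eqv.symm.surjective.iUnion_comp
      (fun e => ((⊤ : D.Subgraph).induce (midSet G ↑e)).edgeSet)
  rw [h1]
  apply Set.Subset.antisymm
  · exact Set.iUnion_subset fun e => SimpleGraph.Subgraph.edgeSet_subset _
  · intro ε hε
    induction ε using Sym2.ind with
    | _ a b =>
      rw [SimpleGraph.mem_edgeSet] at hε
      simp only [Set.mem_iUnion]
      cases a with
      | inl w =>
        cases b with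
        | inl w' => exact absurd hε (ds_adj_inl_inl _ _)
        | inr p =>
          have hp : p.1.1 = w := (ds_adj_inl_inr _ _).mp hε
          refine ⟨⟨Sym2.mk p.1.1 p.1.2, p.2⟩, ?_⟩
          rw [SimpleGraph.Subgraph.mem_edgeSet]
          exact ⟨by rw [mem_midSet_inl, ← hp]; exact Sym2.mem_mk_left _ _, rfl, hε⟩
      | inr p =>
        cases b with
        | inl w =>
          have hp : p.1.1 = w := (ds_adj_inr_inl _ _).mp hε
          refine ⟨⟨Sym2.mk p.1.1 p.1.2, p.2⟩, ?_⟩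
          rw [SimpleGraph.Subgraph.mem_edgeSet]
          exact ⟨rfl, by rw [mem_midSet_inl, ← hp]; exact Sym2.mem_mk_left _ _, hε⟩
        | inr q =>
          obtain ⟨hpq, hc1, hc2⟩ := (ds_adj_inr_inr _ _).mp hε
          refine ⟨⟨Sym2.mk p.1.1 p.1.2, p.2⟩, ?_⟩
          rw [SimpleGraph.Subgraph.mem_edgeSet]
          exact ⟨rfl, Sym2.eq_iff.mpr (Or.inr ⟨hc2.symm, hc1.symm⟩), hε⟩
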